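/- arXiv:2507.04670 — 4 statements merged into one kernel-verified Lean document; each statement's English description precedes it below -/
import Mathlib

section
/- If a differentiable function f on a Riemannian manifold is L-smooth (i.e., f(y) ≤ f(x) + ⟨grad f(x), Exp_x^{-1}(y)⟩ + (L/2) d(x,y)^2), and given x_k, an inexact direction Δ_k with error e_k = grad f(x_k) − Δ_k, and update x_{k+1} = Exp_{x_k}(−η_k Δ_k) with step size 0 < η_k ≤ α_k/(1 + 2 α_k L) for some α_k > 0, then (η_k/2)‖grad f(x_k)‖² ≤ f(x_k) − f(x_{k+1}) + (α_k/2 + L η_k²)‖e_k‖². -/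
open RealInnerProductSpace

/-- Per-iteration descent inequality for Riemannian inexact gradient descent.
The Riemannian data is abstracted via the tangent space `V` at `x k`: `g` is the
Riemannian gradient of `f` at `x k`, `Δ` the inexact direction, and the `L`-smoothness
inequality is instantiated at `y = x (k+1)`, using `Exp_{x_k}^{-1}(x_{k+1}) = -η • Δ`
and `d(x_k, x_{k+1}) = ‖η • Δ‖`. -/
theorem stmt_0
    {V : Type*} [NormedAddCommGroup V] [InnerProductSpace ℝ V]
    (L α η : ℝ) (hL : 0 < L) (hα : 0 < α)
    (hη : 0 < η) (hηle : η ≤ α / (1 + 2 * α * L))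
    (g Δ e : V) (he : e = g - Δ)
    (fxk fxk1 : ℝ)
    (hsmooth : fxk1 ≤ fxk + ⟪g, -η • Δ⟫ + L / 2 * ‖(-η) • Δ‖ ^ 2) :
    η / 2 * ‖g‖ ^ 2 ≤ fxk - fxk1 + (α / 2 + L * η ^ 2) * ‖e‖ ^ 2 := by
  have hΔ : Δ = g - e := by rw [he]; abel
  have hip : ⟪g, -η • Δ⟫ = -η * ⟪g, Δ⟫ := by
    rw [real_inner_smul_right]
  have hn : ‖(-η) • Δ‖ ^ 2 = η ^ 2 * ‖Δ‖ ^ 2 := by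
    rw [norm_smul]
    simp [abs_of_pos hη, mul_pow]
  have h1 : ⟪g, Δ⟫ = ‖g‖ ^ 2 - ⟪g, e⟫ := by
    rw [hΔ, inner_sub_right, real_inner_self_eq_norm_sq]
  have h2 : ‖Δ‖ ^ 2 = ‖g‖ ^ 2 - 2 * ⟪g, e⟫ + ‖e‖ ^ 2 := by
    rw [hΔ, norm_sub_sq_real]
  have h3 : 2 * ⟪g, e⟫ ≤ ‖g‖ ^ 2 + ‖e‖ ^ 2 := by
    nlinarith [sq_nonneg (‖g - e‖), norm_sub_sq_real g e]
  have hden : (0:ℝ) < 1 + 2 * α * L := by positivity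
  have hkey : η * (1 + 2 * α * L) ≤ α := by
    rwa [le_div_iff₀ hden] at hηle
  have hLη : L * η ≤ 1 / 2 := by nlinarith [mul_pos hα hη]
  have hc : 0 ≤ η - L * η ^ 2 := by nlinarith [mul_nonneg hη.le (show (0:ℝ) ≤ 1 - L * η by linarith)]
  have hηα : η ≤ α := by nlinarith [mul_pos (mul_pos hα hL) hη]
  rw [hip, hn, h1, h2] at hsmooth
  nlinarith [mul_nonneg hc (show (0:ℝ) ≤ ‖g‖ ^ 2 + ‖e‖ ^ 2 - 2 * ⟪g, e⟫ by linarith), mul_nonneg hL.le (sq_nonneg η)]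
end

section
/- Suppose f: ℝ^n → ℝ is L-smooth, f is bounded below by f*, and iterates satisfy x_{k+1} = x_k − η Δ_k where Δ_k = ∇f(x_k) − e_k, with η = 1/(3L) and ∑_{k=0}^{K-1}‖e_k‖² ≤ C. Then min_{0≤k<K} ‖∇f(x_k)‖² ≤ (6L/K)(f(x_0) − f*) + (11/(3K)) C. -/
open RealInnerProductSpace

theorem stmt_2
    {E : Type*} [NormedAddCommGroup E] [InnerProductSpace ℝ E] [CompleteSpace E]
    (f : E → ℝ) (L : ℝ) (hL : 0 < L)
    (hsmooth : ∀ x y : E,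
      f y ≤ f x + ⟪gradient f x, y - x⟫ + L / 2 * ‖y - x‖ ^ 2)
    (fstar : ℝ) (hbelow : ∀ x, fstar ≤ f x)
    (x : ℕ → E) (Δ e : ℕ → E) (η : ℝ) (hη : η = 1 / (3 * L))
    (hΔ : ∀ k, Δ k = gradient f (x k) - e k)
    (hupd : ∀ k, x (k + 1) = x k - η • Δ k)
    (K : ℕ) (hK : 0 < K) (C : ℝ)
    (hC : ∑ k ∈ Finset.range K, ‖e k‖ ^ 2 ≤ C) :
    ∃ k < K, ‖gradient f (x k)‖ ^ 2
      ≤ 6 * L / K * (f (x 0) - fstar) + 11 / (3 * K) * C := by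
  have hηpos : 0 < η := by rw [hη]; positivity
  -- per-step descent
  have step : ∀ k, f (x (k+1)) ≤ f (x k)
      - η / 2 * ‖gradient f (x k)‖ ^ 2 + η / 2 * ‖e k‖ ^ 2 := by
    intro k
    have h := hsmooth (x k) (x (k+1))
    have hdiff : x (k+1) - x k = -(η • Δ k) := by
      rw [hupd k]; abel
    rw [hdiff] at h
    set g := gradient f (x k) with hg
    have h1 : ⟪g, -(η • Δ k)⟫ = -(η * (‖g‖^2 - ⟪g, e k⟫)) := by
      rw [inner_neg_right, real_inner_smul_right, hΔ, inner_sub_right,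
        real_inner_self_eq_norm_sq]
    have h2 : ‖-(η • Δ k)‖ ^ 2 = η^2 * (‖g‖^2 - 2 * ⟪g, e k⟫ + ‖e k‖^2) := by
      rw [norm_neg, norm_smul, mul_pow, hΔ, @norm_sub_sq_real]
      simp only [Real.norm_eq_abs, sq_abs]
      try ring
    rw [h1, h2] at h
    have hie : ⟪g, e k⟫ ≤ ‖g‖ * ‖e k‖ := real_inner_le_norm g (e k)
    have hLη : L * η ^ 2 = η / 3 := by
      rw [hη]; field_simp
    nlinarith [sq_nonneg (‖g‖ - ‖e k‖), sq_nonneg (‖g‖ + ‖e k‖),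
      mul_pos hηpos (mul_pos hηpos hL), sq_nonneg ‖e k‖]
  -- telescoping
  have sumle : ∀ N : ℕ, η / 2 * ∑ k ∈ Finset.range N, ‖gradient f (x k)‖ ^ 2
      ≤ f (x 0) - f (x N) + η / 2 * ∑ k ∈ Finset.range N, ‖e k‖ ^ 2 := by
    intro N
    induction N with
    | zero => simp
    | succ n ih =>
      rw [Finset.sum_range_succ, Finset.sum_range_succ]
      have := step n
      nlinarith
  have hsum := sumle K
  have hfK := hbelow (x K)
  -- C nonneg
  have hCnn : 0 ≤ C := le_trans (Finset.sum_nonneg fun i _ => by positivity) hC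
  -- get the min
  obtain ⟨k0, hk0mem, hk0min⟩ := Finset.exists_min_image (Finset.range K)
    (fun k => ‖gradient f (x k)‖ ^ 2) ⟨0, Finset.mem_range.mpr hK⟩
  refine ⟨k0, Finset.mem_range.mp hk0mem, ?_⟩
  have hcard : (K : ℝ) * ‖gradient f (x k0)‖ ^ 2
      ≤ ∑ k ∈ Finset.range K, ‖gradient f (x k)‖ ^ 2 := by
    calc (K : ℝ) * ‖gradient f (x k0)‖ ^ 2
        = ∑ _k ∈ Finset.range K, ‖gradient f (x k0)‖ ^ 2 := by
          rw [Finset.sum_const, Finset.card_range, nsmul_eq_mul]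
      _ ≤ _ := Finset.sum_le_sum fun i hi => hk0min i hi
  have hKpos : (0:ℝ) < K := Nat.cast_pos.mpr hK
  have hηL : η = 1 / (3 * L) := hη
  -- combine
  have key : (K:ℝ) * ‖gradient f (x k0)‖ ^ 2 ≤ 2 / η * (f (x 0) - fstar) + C := by
    have h2 : η / 2 * ((K:ℝ) * ‖gradient f (x k0)‖ ^ 2)
        ≤ f (x 0) - fstar + η / 2 * C := by
      calc η / 2 * ((K:ℝ) * ‖gradient f (x k0)‖ ^ 2)
          ≤ η / 2 * ∑ k ∈ Finset.range K, ‖gradient f (x k)‖ ^ 2 := by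
            apply mul_le_mul_of_nonneg_left hcard (by positivity)
        _ ≤ f (x 0) - f (x K) + η / 2 * ∑ k ∈ Finset.range K, ‖e k‖ ^ 2 := hsum
        _ ≤ f (x 0) - fstar + η / 2 * C := by
            have := mul_le_mul_of_nonneg_left hC (le_of_lt (by positivity : (0:ℝ) < η/2))
            linarith
    have hη2 : (0:ℝ) < 2 / η := by positivity
    calc (K:ℝ) * ‖gradient f (x k0)‖ ^ 2
        = 2 / η * (η / 2 * ((K:ℝ) * ‖gradient f (x k0)‖ ^ 2)) := by
          field_simp
      _ ≤ 2 / η * (f (x 0) - fstar + η / 2 * C) := by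
          apply mul_le_mul_of_nonneg_left h2 (le_of_lt hη2)
      _ = 2 / η * (f (x 0) - fstar) + C := by field_simp
  have h2η : 2 / η = 6 * L := by rw [hη]; field_simp; ring
  rw [h2η] at key
  have h1 : ‖gradient f (x k0)‖ ^ 2 ≤ (6 * L * (f (x 0) - fstar) + C) / K := by
    rw [le_div_iff₀ hKpos]; linarith [key]
  refine le_trans h1 ?_
  have heq : 6 * L / (K:ℝ) * (f (x 0) - fstar) + 11 / (3 * (K:ℝ)) * C
      = (6 * L * (f (x 0) - fstar) + 11 / 3 * C) / K := by field_simp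
  rw [heq]
  gcongr
  linarith
end

section
/- Let Δ = g − e be vectors in an inner product space with ‖e‖ ≤ δ‖g‖ and δ ∈ [0,1). Then for any ᾱ ∈ (1, 1/δ²), ‖Δ‖² ≥ (1 − 1/ᾱ + (1−ᾱ)δ²)‖g‖², and the coefficient 1 − 1/ᾱ + (1−ᾱ)δ² is positive. -/
open RealInnerProductSpace

theorem stmt_7
    {E : Type*} [NormedAddCommGroup E] [InnerProductSpace ℝ E]
    (g e : E) (δ : ℝ) (hδ0 : 0 ≤ δ) (hδ1 : δ < 1)
    (he : ‖e‖ ≤ δ * ‖g‖)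
    (α : ℝ) (hα1 : 1 < α) (hαδ : α * δ ^ 2 < 1) :
    ‖g - e‖ ^ 2 ≥ (1 - 1 / α + (1 - α) * δ ^ 2) * ‖g‖ ^ 2
    ∧ 0 < 1 - 1 / α + (1 - α) * δ ^ 2 := by
  have hα0 : (0:ℝ) < α := by linarith
  have he2 : ‖e‖ ^ 2 ≤ δ ^ 2 * ‖g‖ ^ 2 := by
    nlinarith [norm_nonneg e, norm_nonneg g]
  constructor
  · have h1 := norm_sub_sq_real g e
    have h2 := real_inner_le_norm g e
    have h3 : α * ⟪g, e⟫ ≤ α * (‖g‖ * ‖e‖) :=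
      mul_le_mul_of_nonneg_left h2 hα0.le
    have h4 : 0 ≤ (α ^ 2 - α) * (δ ^ 2 * ‖g‖ ^ 2 - ‖e‖ ^ 2) := by
      apply mul_nonneg <;> nlinarith
    rw [ge_iff_le, ← sub_nonneg]
    have key : 0 ≤ α * (‖g - e‖ ^ 2 - (1 - 1 / α + (1 - α) * δ ^ 2) * ‖g‖ ^ 2) := by
      have hexp : α * (1 - 1 / α + (1 - α) * δ ^ 2) = α - 1 + α * (1 - α) * δ ^ 2 := by
        field_simp
      nlinarith [sq_nonneg (‖g‖ - α * ‖e‖)]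
    nlinarith
  · have hδα : δ ^ 2 < 1 / α := by
      rw [lt_div_iff₀ hα0]; nlinarith
    have h := mul_pos (by linarith : (0:ℝ) < α - 1) (by linarith : (0:ℝ) < 1 / α - δ ^ 2)
    have heq : (α - 1) * (1 / α - δ ^ 2) = 1 - 1 / α + (1 - α) * δ ^ 2 := by
      field_simp; ring
    linarith
end

section
/- Let f: ℝ^n → ℝ be L-smooth with minimizer value f(x*) and consider inexact gradient descent x_{k+1} = x_k − η_k Δ_k, Δ_k = ∇f(x_k) − e_k with ‖e_k‖² ≤ 1/(k+1), α_k = 1/(2L log²(k+2)) and η_k = α_k/2. Then min_{0≤k<K}‖∇f(x_k)‖² ≤ (8L log²(K+2)/K)(f(x_0) − f(x*)) + (21/(2K)) log²(K+2). -/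
open Finset

private lemma one_sub_inv_le_log' {t : ℝ} (ht : 0 < t) : 1 - 1/t ≤ Real.log t := by
  have h := Real.log_le_sub_one_of_pos (show (0:ℝ) < 1/t by positivity)
  rw [one_div, Real.log_inv] at h
  have : 1/t = t⁻¹ := one_div t
  rw [this]; linarith

private lemma log3_lb' : (1.0598:ℝ) ≤ Real.log 3 := by
  have h2 : (0.6931471803:ℝ) < Real.log 2 := Real.log_two_gt_d9
  have h65 : 1 - 1/(6/5:ℝ) ≤ Real.log (6/5) := one_sub_inv_le_log' (by norm_num)
  have h54 : 1 - 1/(5/4:ℝ) ≤ Real.log (5/4) := one_sub_inv_le_log' (by norm_num)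
  have h3 : Real.log 3 = Real.log 2 + Real.log (6/5) + Real.log (5/4) := by
    rw [← Real.log_mul (by norm_num) (by norm_num), ← Real.log_mul (by norm_num) (by norm_num)]
    norm_num
  rw [h3]; norm_num at h65 h54 ⊢; linarith

-- per-term telescoping bound, k = j + 2
private lemma term_le' (j : ℕ) :
    4/(((j:ℝ)+3)*Real.log ((j:ℝ)+4)^2) + 1/(((j:ℝ)+3)*Real.log ((j:ℝ)+4)^4)
      ≤ (4/3) * (4 + 1/(2*Real.log 2)^2) * (1/Real.log ((j:ℝ)+3) - 1/Real.log ((j:ℝ)+4)) := by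
  set m : ℝ := (j:ℝ) with hm
  have hm0 : (0:ℝ) ≤ m := Nat.cast_nonneg j
  set a := Real.log (m+3) with ha'
  set b := Real.log (m+4) with hb'
  have hl2 : (0.6931471803:ℝ) < Real.log 2 := Real.log_two_gt_d9
  have ha3 : Real.log 3 ≤ a := Real.log_le_log (by norm_num) (by linarith)
  have ha : (0:ℝ) < a := lt_of_lt_of_le (by linarith [log3_lb']) ha3
  have hb4 : 2 * Real.log 2 ≤ b := by
    have h4 : Real.log 4 ≤ b := Real.log_le_log (by norm_num) (by linarith)
    have : Real.log 4 = 2 * Real.log 2 := by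
      rw [show (4:ℝ) = 2*2 by norm_num, Real.log_mul (by norm_num) (by norm_num)]; ring
    linarith
  have hb : (0:ℝ) < b := by linarith
  have hab : a ≤ b := Real.log_le_log (by linarith) (by linarith)
  have hba : 1/(m+4) ≤ b - a := by
    have h := Real.log_le_sub_one_of_pos (show (0:ℝ) < (m+3)/(m+4) by positivity)
    rw [Real.log_div (by linarith) (by linarith)] at h
    have h2 : (m+3)/(m+4) - 1 = -(1/(m+4)) := by field_simp; ring
    rw [h2] at h; linarith
  obtain ⟨C, hC⟩ : ∃ C : ℝ, C = 4 + 1/(2*Real.log 2)^2 := ⟨_, rfl⟩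
  rw [show (4:ℝ) + 1/(2*Real.log 2)^2 = C from hC.symm]
  have hCpos : (0:ℝ) < C := by rw [hC]; positivity
  have key0 : 1/b^2 ≤ 1/(2*Real.log 2)^2 := by
    apply one_div_le_one_div_of_le (by positivity)
    nlinarith
  have key1 : 1/((m+3)*b^4) ≤ (1/(2*Real.log 2)^2) * (1/((m+3)*b^2)) := by
    have heq : 1/((m+3)*b^4) = (1/b^2) * (1/((m+3)*b^2)) := by
      field_simp
    rw [heq]
    exact mul_le_mul_of_nonneg_right key0 (by positivity)
  have key2 : 4/((m+3)*b^2) + 1/((m+3)*b^4) ≤ C * (1/((m+3)*b^2)) := by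
    have h4 : 4/((m+3)*b^2) = 4 * (1/((m+3)*b^2)) := by ring
    rw [hC]; rw [h4]; nlinarith [key1]
  have key3 : 1/((m+3)*b^2) ≤ (4/3) * (1/((m+4)*(a*b))) := by
    rw [show (4:ℝ)/3 * (1/((m+4)*(a*b))) = (4/3)/((m+4)*(a*b)) by ring,
        show (1:ℝ)/((m+3)*b^2) = 1/((m+3)*b^2) from rfl]
    rw [div_le_div_iff₀ (by positivity) (by positivity)]
    nlinarith [mul_le_mul_of_nonneg_right hab hb.le, sq_nonneg b,
      mul_nonneg hm0 (mul_nonneg (mul_nonneg ha.le hb.le) hb.le),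
      mul_nonneg hm0 (mul_nonneg hb.le hb.le)]
  have key4 : 1/((m+4)*(a*b)) ≤ 1/a - 1/b := by
    have heq : 1/a - 1/b = (b-a)/(a*b) := by
      field_simp
    rw [heq, show (1:ℝ)/((m+4)*(a*b)) = (1/(m+4))/(a*b) by rw [div_div]]
    gcongr
  calc 4/((m+3)*b^2) + 1/((m+3)*b^4) ≤ C * (1/((m+3)*b^2)) := key2
    _ ≤ C * ((4/3) * (1/((m+4)*(a*b)))) := mul_le_mul_of_nonneg_left key3 hCpos.le
    _ ≤ C * ((4/3) * (1/a - 1/b)) := by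
        apply mul_le_mul_of_nonneg_left _ hCpos.le
        apply mul_le_mul_of_nonneg_left key4 (by norm_num)
    _ = (4/3) * C * (1/a - 1/b) := by ring

private lemma sumD_le' (K : ℕ) :
    ∑ k ∈ Finset.range K,
      (4/(((k:ℝ)+1)*Real.log ((k:ℝ)+2)^2) + 1/(((k:ℝ)+1)*Real.log ((k:ℝ)+2)^4)) ≤ 21 := by
  obtain ⟨D, hD⟩ : ∃ D : ℕ → ℝ, D = fun k : ℕ =>
      4/(((k:ℝ)+1)*Real.log ((k:ℝ)+2)^2) + 1/(((k:ℝ)+1)*Real.log ((k:ℝ)+2)^4) :=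
    ⟨fun k : ℕ => 4/(((k:ℝ)+1)*Real.log ((k:ℝ)+2)^2) + 1/(((k:ℝ)+1)*Real.log ((k:ℝ)+2)^4), rfl⟩
  rw [show (fun k : ℕ =>
      4/(((k:ℝ)+1)*Real.log ((k:ℝ)+2)^2) + 1/(((k:ℝ)+1)*Real.log ((k:ℝ)+2)^4)) = D
    from hD.symm]
  have hl2 : (0.6931471803:ℝ) < Real.log 2 := Real.log_two_gt_d9
  have hl2' : Real.log 2 < 0.6931471808 := Real.log_two_lt_d9
  have hl3 : (1.0598:ℝ) ≤ Real.log 3 := log3_lb'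
  have hlogpos : ∀ k : ℕ, (0:ℝ) < Real.log ((k:ℝ)+2) := by
    intro k
    have : Real.log 2 ≤ Real.log ((k:ℝ)+2) :=
      Real.log_le_log (by norm_num) (by push_cast; linarith [Nat.cast_nonneg (α := ℝ) k])
    linarith
  have hDnonneg : ∀ k : ℕ, 0 ≤ D k := by
    intro k
    have := hlogpos k
    have h1 : (0:ℝ) < (k:ℝ)+1 := by positivity
    rw [hD]
    positivity
  obtain ⟨C, hC⟩ : ∃ C : ℝ, C = 4 + 1/(2*Real.log 2)^2 := ⟨_, rfl⟩
  have hCpos : (0:ℝ) < C := by rw [hC]; positivity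
  -- numeric bounds
  have e1 : 4/(Real.log 2)^2 ≤ 8.327 := by
    rw [div_le_iff₀ (by positivity)]; nlinarith
  have e2 : ((Real.log 2)^4)⁻¹ ≤ 4.334 := by
    rw [inv_le_comm₀ (by positivity) (by norm_num)]
    nlinarith [sq_nonneg ((Real.log 2)^2 - 0.4804)]
  have e3 : 4/(2*(Real.log 3)^2) ≤ 1.781 := by
    rw [div_le_iff₀ (by positivity)]; nlinarith
  have e4 : ((Real.log 3)^4)⁻¹ ≤ 0.794 := by
    rw [inv_le_comm₀ (by positivity) (by norm_num)]
    nlinarith [sq_nonneg ((Real.log 3)^2 - 1.1231)]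
  have e5 : C ≤ 4.5205 := by
    rw [hC]
    have : 1/(2*Real.log 2)^2 ≤ 0.5205 := by
      rw [div_le_iff₀ (by positivity)]; nlinarith
    linarith
  have e6 : 1/Real.log 3 ≤ 0.9436 := by
    rw [div_le_iff₀ (by positivity)]; nlinarith
  -- head terms
  have hD0 : D 0 ≤ 12.661 := by
    simp only [hD]
    norm_num
    linarith [e1, e2]
  have hD1 : D 1 ≤ 2.178 := by
    simp only [hD]
    norm_num
    linarith [e3, e4]
  -- tail bound
  have htail : ∀ n : ℕ, ∑ j ∈ Finset.range n, D (2 + j) ≤ (4/3) * C * (1/Real.log 3) := by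
    intro n
    obtain ⟨p, hp⟩ : ∃ p : ℕ → ℝ, p = fun i : ℕ => 1/Real.log ((i:ℝ)+3) :=
      ⟨fun i : ℕ => 1/Real.log ((i:ℝ)+3), rfl⟩
    have step : ∀ j : ℕ, D (2 + j)
        ≤ (4/3) * C * (1/Real.log ((j:ℝ)+3) - 1/Real.log ((j:ℝ)+4)) := by
      intro j
      have := term_le' j
      simp only [hD]
      push_cast
      convert this using 3 <;> push_cast <;> ring_nf
    calc ∑ j ∈ Finset.range n, D (2 + j)
        ≤ ∑ j ∈ Finset.range n, (4/3) * C * (1/Real.log ((j:ℝ)+3) - 1/Real.log ((j:ℝ)+4)) :=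
          Finset.sum_le_sum (fun j _ => step j)
      _ = (4/3) * C * ∑ j ∈ Finset.range n, (p j - p (j+1)) := by
          rw [← Finset.mul_sum]; congr 1; apply Finset.sum_congr rfl; intro j _
          simp only [hp]; push_cast; ring_nf
      _ = (4/3) * C * (p 0 - p n) := by
          rw [Finset.sum_range_sub' p n]
      _ ≤ (4/3) * C * (1/Real.log 3) := by
          have hpos : (0:ℝ) ≤ p n := by
            have h3 : (0:ℝ) < Real.log ((n:ℝ)+3) := by
              have : Real.log 2 ≤ Real.log ((n:ℝ)+3) :=
                Real.log_le_log (by norm_num) (by linarith [Nat.cast_nonneg (α := ℝ) n])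
              linarith
            simp only [hp]; positivity
          have hp0 : p 0 = 1/Real.log 3 := by simp only [hp]; norm_num
          rw [hp0] at *
          nlinarith [mul_nonneg hCpos.le hpos]
  rcases le_or_gt K 2 with hK2 | hK2
  · calc ∑ k ∈ Finset.range K, D k ≤ ∑ k ∈ Finset.range 2, D k :=
        Finset.sum_le_sum_of_subset_of_nonneg
          (Finset.range_subset_range.2 hK2) (fun k _ _ => hDnonneg k)
      _ = D 0 + D 1 := by simp [Finset.sum_range_succ]
      _ ≤ 21 := by linarith [hD0, hD1]
  · have hsplit : ∑ k ∈ Finset.range K, D k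
        = (D 0 + D 1) + ∑ k ∈ Finset.Ico 2 K, D k := by
      rw [Finset.range_eq_Ico, ← Finset.sum_Ico_consecutive D (by norm_num) hK2.le]
      congr 1
      rw [show Finset.Ico 0 2 = Finset.range 2 by rw [Finset.range_eq_Ico]]
      simp [Finset.sum_range_succ]
    rw [hsplit, Finset.sum_Ico_eq_sum_range]
    have := htail (K - 2)
    have hnum : (4/3) * C * (1/Real.log 3) ≤ 5.688 := by
      nlinarith [hCpos, e5, e6, mul_le_mul e5 e6 (by positivity) (by norm_num)]
    linarith

open RealInnerProductSpace

theorem stmt_12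
    {E : Type*} [NormedAddCommGroup E] [InnerProductSpace ℝ E] [CompleteSpace E]
    (f : E → ℝ) (L : ℝ) (hL : 0 < L)
    (xstar : E) (hbelow : ∀ x, f xstar ≤ f x)
    (x : ℕ → E) (Δ e : ℕ → E) (α η : ℕ → ℝ)
    (hα : ∀ k, α k = 1 / (2 * L * Real.log ((k : ℝ) + 2) ^ 2))
    (hη : ∀ k, η k = α k / 2)
    (hΔ : ∀ k, Δ k = gradient f (x k) - e k)
    (hupd : ∀ k, x (k + 1) = x k - η k • Δ k)
    (he : ∀ k, ‖e k‖ ^ 2 ≤ 1 / ((k : ℝ) + 1))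
    (hstep : ∀ k, η k / 2 * ‖gradient f (x k)‖ ^ 2
      ≤ f (x k) - f (x (k + 1)) + (α k / 2 + L * η k ^ 2) * ‖e k‖ ^ 2)
    (K : ℕ) (hK : 0 < K) :
    ∃ k < K, ‖gradient f (x k)‖ ^ 2
      ≤ 8 * L * Real.log ((K : ℝ) + 2) ^ 2 / K * (f (x 0) - f xstar)
        + 21 / (2 * K) * Real.log ((K : ℝ) + 2) ^ 2 := by
  have hlogpos : ∀ k : ℕ, (0:ℝ) < Real.log ((k:ℝ)+2) := by
    intro k
    have h2 : Real.log 2 ≤ Real.log ((k:ℝ)+2) :=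
      Real.log_le_log (by norm_num) (by linarith [Nat.cast_nonneg (α := ℝ) k])
    linarith [Real.log_two_gt_d9]
  set LK : ℝ := Real.log ((K:ℝ)+2) with hLK
  have hLKpos : 0 < LK := hlogpos K
  have hKR : (0:ℝ) < (K:ℝ) := by exact_mod_cast hK
  -- minimum over range K
  obtain ⟨k₀, hk₀mem, hk₀min⟩ :=
    Finset.exists_min_image (Finset.range K) (fun k => ‖gradient f (x k)‖^2)
      ⟨0, Finset.mem_range.2 hK⟩
  set M : ℝ := ‖gradient f (x k₀)‖^2 with hM
  have hMnonneg : 0 ≤ M := by positivity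
  -- telescoping sum of hstep
  have htel : ∑ k ∈ Finset.range K, (f (x k) - f (x (k+1))) = f (x 0) - f (x K) :=
    Finset.sum_range_sub' (fun k => f (x k)) K
  have hsum : ∑ k ∈ Finset.range K, η k / 2 * ‖gradient f (x k)‖^2
      ≤ (f (x 0) - f (x K))
        + ∑ k ∈ Finset.range K, (α k / 2 + L * η k ^ 2) * ‖e k‖^2 := by
    calc ∑ k ∈ Finset.range K, η k / 2 * ‖gradient f (x k)‖^2
        ≤ ∑ k ∈ Finset.range K,
            ((f (x k) - f (x (k+1))) + (α k / 2 + L * η k ^ 2) * ‖e k‖^2) :=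
          Finset.sum_le_sum (fun k _ => hstep k)
      _ = _ := by rw [Finset.sum_add_distrib, htel]
  -- lower bound on LHS
  have hlow : (K:ℝ) * (1/(8*L*LK^2) * M)
      ≤ ∑ k ∈ Finset.range K, η k / 2 * ‖gradient f (x k)‖^2 := by
    have hper : ∀ k ∈ Finset.range K,
        1/(8*L*LK^2) * M ≤ η k / 2 * ‖gradient f (x k)‖^2 := by
      intro k hkmem
      have hk : k < K := Finset.mem_range.1 hkmem
      have hbk := hlogpos k
      have hbkLK : Real.log ((k:ℝ)+2) ≤ LK := by
        rw [hLK]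
        apply Real.log_le_log (by linarith [Nat.cast_nonneg (α := ℝ) k])
        have : (k:ℝ) ≤ (K:ℝ) := by exact_mod_cast hk.le
        linarith
      have hηk : η k / 2 = 1/(8*L*Real.log ((k:ℝ)+2)^2) := by
        rw [hη k, hα k]; field_simp; ring
      have hc : 1/(8*L*LK^2) ≤ 1/(8*L*Real.log ((k:ℝ)+2)^2) := by
        apply one_div_le_one_div_of_le (by positivity)
        have : Real.log ((k:ℝ)+2)^2 ≤ LK^2 := by nlinarith
        nlinarith
      rw [hηk]
      exact mul_le_mul hc (hk₀min k hkmem) hMnonneg (by positivity)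
    calc (K:ℝ) * (1/(8*L*LK^2) * M)
        = ∑ _k ∈ Finset.range K, 1/(8*L*LK^2) * M := by
          rw [Finset.sum_const, Finset.card_range, nsmul_eq_mul]
      _ ≤ _ := Finset.sum_le_sum hper
  -- upper bound on error sum
  have herr : ∑ k ∈ Finset.range K, (α k / 2 + L * η k ^ 2) * ‖e k‖^2 ≤ 21/(16*L) := by
    have hper : ∀ k ∈ Finset.range K, (α k / 2 + L * η k ^ 2) * ‖e k‖^2
        ≤ 1/(16*L) * (4/(((k:ℝ)+1)*Real.log ((k:ℝ)+2)^2)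
            + 1/(((k:ℝ)+1)*Real.log ((k:ℝ)+2)^4)) := by
      intro k _
      have hbk := hlogpos k
      have hk1 : (0:ℝ) < (k:ℝ)+1 := by positivity
      have hcoef : α k / 2 + L * η k ^ 2
          = 1/(4*L*Real.log ((k:ℝ)+2)^2) + 1/(16*L*Real.log ((k:ℝ)+2)^4) := by
        rw [hη k, hα k]; field_simp; ring
      have hcoefpos : 0 ≤ α k / 2 + L * η k ^ 2 := by rw [hcoef]; positivity
      have heq : (α k / 2 + L * η k ^ 2) * (1/((k:ℝ)+1))
          = 1/(16*L) * (4/(((k:ℝ)+1)*Real.log ((k:ℝ)+2)^2)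
              + 1/(((k:ℝ)+1)*Real.log ((k:ℝ)+2)^4)) := by
        rw [hcoef]; field_simp; ring
      calc (α k / 2 + L * η k ^ 2) * ‖e k‖^2
          ≤ (α k / 2 + L * η k ^ 2) * (1/((k:ℝ)+1)) :=
            mul_le_mul_of_nonneg_left (he k) hcoefpos
        _ = _ := heq
    calc ∑ k ∈ Finset.range K, (α k / 2 + L * η k ^ 2) * ‖e k‖^2
        ≤ ∑ k ∈ Finset.range K, 1/(16*L) * (4/(((k:ℝ)+1)*Real.log ((k:ℝ)+2)^2)
            + 1/(((k:ℝ)+1)*Real.log ((k:ℝ)+2)^4)) := Finset.sum_le_sum hper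
      _ = 1/(16*L) * ∑ k ∈ Finset.range K, (4/(((k:ℝ)+1)*Real.log ((k:ℝ)+2)^2)
            + 1/(((k:ℝ)+1)*Real.log ((k:ℝ)+2)^4)) := by rw [Finset.mul_sum]
      _ ≤ 1/(16*L) * 21 := by
          apply mul_le_mul_of_nonneg_left (sumD_le' K) (by positivity)
      _ = 21/(16*L) := by ring
  -- combine
  have hfinal : (K:ℝ) * (1/(8*L*LK^2) * M) ≤ (f (x 0) - f xstar) + 21/(16*L) := by
    have := hbelow (x K)
    linarith [hsum, hlow, herr]
  refine ⟨k₀, Finset.mem_range.1 hk₀mem, ?_⟩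
  have hMle : M ≤ 8*L*LK^2/(K:ℝ) * ((f (x 0) - f xstar) + 21/(16*L)) := by
    have hrw : M = 8*L*LK^2/(K:ℝ) * ((K:ℝ) * (1/(8*L*LK^2) * M)) := by
      field_simp
    rw [hrw]
    exact mul_le_mul_of_nonneg_left hfinal (by positivity)
  have hexp : 8*L*LK^2/(K:ℝ) * ((f (x 0) - f xstar) + 21/(16*L))
      = 8*L*LK^2/(K:ℝ) * (f (x 0) - f xstar) + 21/(2*(K:ℝ)) * LK^2 := by
    field_simp; ring
  rw [hexp] at hMle
  exact hMle
end
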